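/- A graph G is neighborhood perfect (the neighborhood of every vertex induces a perfect graph) if and only if for all k ∈ ℕ₀ and all induced subgraphs H of G, H ∈ Ω_k if and only if H ∈ Υ_k. -/

import Mathlib

open SimpleGraph

attribute [local instance] Classical.propDecidable

set_option linter.unnecessarySeqFocus false

/-- `G ∈ Υ_k`: every nonempty induced subgraph `H` satisfies `Δ(H) + 1 ≤ χ(H) + k`,
i.e. `Δ(H) ≤ χ(H) + k - 1`. -/
def UpsilonMem (k : ℕ) {V : Type*} [Fintype V] (G : SimpleGraph V) : Prop :=
  ∀ s : Finset V, s.Nonempty →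
    ((G.induce (s : Set V)).maxDegree + 1 : ℕ∞) ≤
      (G.induce (s : Set V)).chromaticNumber + (k : ℕ∞)

/-- `G ∈ Ω_k`: every nonempty induced subgraph `H` satisfies `Δ(H) + 1 ≤ ω(H) + k`. -/
def OmegaMem (k : ℕ) {V : Type*} [Fintype V] (G : SimpleGraph V) : Prop :=
  ∀ s : Finset V, s.Nonempty →
    (G.induce (s : Set V)).maxDegree + 1 ≤ (G.induce (s : Set V)).cliqueNum + k

/-- `G` is a minimal forbidden induced subgraph for `Υ_k`. -/
def MinForbUpsilon (k : ℕ) {V : Type*} [Fintype V] (G : SimpleGraph V) : Prop :=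
  ¬ UpsilonMem k G ∧
    ∀ s : Finset V, s ≠ Finset.univ → UpsilonMem k (G.induce (s : Set V))

/-- `G` is a minimal forbidden induced subgraph for `Ω_k`. -/
def MinForbOmega (k : ℕ) {V : Type*} [Fintype V] (G : SimpleGraph V) : Prop :=
  ¬ OmegaMem k G ∧
    ∀ s : Finset V, s ≠ Finset.univ → OmegaMem k (G.induce (s : Set V))

/-- `v` is a dominating vertex of `G`. -/
def IsDominatingVertex {V : Type*} (G : SimpleGraph V) (v : V) : Prop :=
  ∀ w, w ≠ v → G.Adj v w

/-- In every optimal proper coloring of `G`, every used color class has at least 2 vertices. -/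
def AllColorClassesBig {V : Type*} [Fintype V] (G : SimpleGraph V) : Prop :=
  ∀ (n : ℕ) (C : G.Coloring (Fin n)), (n : ℕ∞) = G.chromaticNumber →
    ∀ c : Fin n, (∃ u, C u = c) → 2 ≤ Fintype.card {u // C u = c}

/-- `G` is a perfect graph: clique number equals chromatic number for every induced subgraph. -/
def IsPerfect {V : Type*} [Fintype V] (G : SimpleGraph V) : Prop :=
  ∀ s : Finset V,
    (((G.induce (s : Set V)).cliqueNum : ℕ∞)) = (G.induce (s : Set V)).chromaticNumber

/-- Add a dominating vertex to `G`. -/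
def cone {V : Type*} (G : SimpleGraph V) : SimpleGraph (Option V) where
  Adj a b := match a, b with
    | some a, some b => G.Adj a b
    | some _, none => True
    | none, some _ => True
    | none, none => False
  symm := ⟨by rintro (_|a) (_|b) h <;> simp_all <;> exact h.symm⟩
  loopless := ⟨by rintro (_|a) h <;> simp_all⟩

/-- The claw `K_{1,3}`. -/
def claw : SimpleGraph (Fin 1 ⊕ Fin 3) := completeBipartiteGraph (Fin 1) (Fin 3)

/-- The gem: `P₄` plus a dominating vertex. -/
def gem : SimpleGraph (Option (Fin 4)) := cone (pathGraph 4)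

/-- The wheel `W₄`: `C₄` plus a dominating vertex. -/
def wheel4 : SimpleGraph (Option (Fin 4)) := cone (cycleGraph 4)

/-- The butterfly: two triangles sharing exactly one vertex. -/
def butterfly : SimpleGraph (Fin 5) :=
  SimpleGraph.fromRel (fun a b =>
    (a, b) ∈ [((0:Fin 5), (1:Fin 5)), (0,2), (1,2), (0,3), (0,4), (3,4)])

/-- `G` is a disjoint union of complete graphs. -/
def IsUnionOfCliques {V : Type*} (G : SimpleGraph V) : Prop :=
  ∀ a b c, G.Adj a b → G.Adj b c → a ≠ c → G.Adj a c

/-- `G` is neighborhood perfect: the neighborhood of every vertex induces a perfect graph. -/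
def NbhdPerfect {V : Type*} [Fintype V] (G : SimpleGraph V) : Prop :=
  ∀ v : V, IsPerfect (G.induce (G.neighborSet v))


section NPaux

set_option linter.unusedSectionVars false

variable {V : Type*} [Fintype V]

/-! ### Iso invariance lemmas -/

private lemma cliqueNum_le_of_emb {α β : Type*} [Fintype α] [Fintype β]
    {A : SimpleGraph α} {B : SimpleGraph β} (f : A ↪g B) : A.cliqueNum ≤ B.cliqueNum := by
  obtain ⟨s, hs⟩ := A.exists_isNClique_cliqueNum
  have hc : B.IsClique (↑(s.map f.toEmbedding)) := by
    rw [Finset.coe_map]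
    rintro x ⟨a, ha, rfl⟩ y ⟨b, hb, rfl⟩ hxy
    simp only [RelEmbedding.coe_toEmbedding] at hxy ⊢
    exact f.map_rel_iff.2 (hs.1 ha hb fun h => hxy (by rw [h]))
  calc A.cliqueNum = (s.map f.toEmbedding).card := by rw [Finset.card_map, hs.2]
    _ ≤ B.cliqueNum := hc.card_le_cliqueNum

private lemma cliqueNum_eq_of_iso {α β : Type*} [Fintype α] [Fintype β]
    {A : SimpleGraph α} {B : SimpleGraph β} (f : A ≃g B) : A.cliqueNum = B.cliqueNum :=
  le_antisymm (cliqueNum_le_of_emb f.toEmbedding) (cliqueNum_le_of_emb f.symm.toEmbedding)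

private lemma chromaticNumber_eq_of_iso {α β : Type*}
    {A : SimpleGraph α} {B : SimpleGraph β} (f : A ≃g B) :
    A.chromaticNumber = B.chromaticNumber :=
  le_antisymm (chromaticNumber_mono_of_hom f.toEmbedding.toHom)
    (chromaticNumber_mono_of_hom f.symm.toEmbedding.toHom)

private lemma degree_eq_of_iso {α β : Type*} [Fintype α] [Fintype β]
    {A : SimpleGraph α} {B : SimpleGraph β} [DecidableRel A.Adj] [DecidableRel B.Adj]
    (f : A ≃g B) (v : α) : A.degree v = B.degree (f v) := by
  rw [← card_neighborSet_eq_degree, ← card_neighborSet_eq_degree]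
  exact Fintype.card_congr (f.mapNeighborSet v)

private lemma maxDegree_le_of_iso {α β : Type*} [Fintype α] [Fintype β]
    {A : SimpleGraph α} {B : SimpleGraph β} [DecidableRel A.Adj] [DecidableRel B.Adj]
    (f : A ≃g B) : A.maxDegree ≤ B.maxDegree := by
  apply SimpleGraph.maxDegree_le_of_forall_degree_le
  intro v
  rw [degree_eq_of_iso f v]
  exact B.degree_le_maxDegree _

private lemma maxDegree_eq_of_iso {α β : Type*} [Fintype α] [Fintype β]
    {A : SimpleGraph α} {B : SimpleGraph β} [DecidableRel A.Adj] [DecidableRel B.Adj]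
    (f : A ≃g B) : A.maxDegree = B.maxDegree :=
  le_antisymm (maxDegree_le_of_iso f) (maxDegree_le_of_iso f.symm)

/-! ### The induce-induce iso -/

private def induceInduceIso (G : SimpleGraph V) (s : Set V) (t : Set ↥s) :
    ((G.induce s).induce t) ≃g (G.induce (Subtype.val '' t)) where
  toFun a := ⟨a.1.1, ⟨a.1, a.2, rfl⟩⟩
  invFun b := ⟨⟨b.1, by obtain ⟨x, _, he⟩ := b.2; exact he ▸ x.2⟩, by
    obtain ⟨x, hx, he⟩ := b.2
    have hxx : x = ⟨b.1, by obtain ⟨y, _, hey⟩ := b.2; exact hey ▸ y.2⟩ := Subtype.ext he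
    exact hxx ▸ hx⟩
  left_inv a := Subtype.ext (Subtype.ext rfl)
  right_inv b := Subtype.ext rfl
  map_rel_iff' := Iff.rfl

/-! ### Numerical invariants of induced subgraphs on finsets -/

private noncomputable def Wn (G : SimpleGraph V) (s : Finset V) : ℕ :=
  (G.induce (s : Set V)).cliqueNum

private noncomputable def Xn (G : SimpleGraph V) (s : Finset V) : ℕ :=
  (G.induce (s : Set V)).chromaticNumber.toNat

private noncomputable def Dn (G : SimpleGraph V) (s : Finset V) : ℕ :=
  (G.induce (s : Set V)).maxDegree

private lemma Wn_def (G : SimpleGraph V) (s : Finset V) :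
    Wn G s = (G.induce (s : Set V)).cliqueNum := rfl

private lemma Dn_def (G : SimpleGraph V) (s : Finset V) :
    Dn G s = (G.induce (s : Set V)).maxDegree := rfl

private lemma chrom_eq (G : SimpleGraph V) (s : Finset V) :
    (G.induce (s : Set V)).chromaticNumber = (Xn G s : ℕ∞) :=
  (ENat.coe_toNat (by
    rw [SimpleGraph.chromaticNumber_ne_top_iff_exists]
    exact ⟨_, (G.induce (s : Set V)).colorable_of_fintype⟩)).symm

private lemma colorable_Xn (G : SimpleGraph V) (s : Finset V) :
    (G.induce (s : Set V)).Colorable (Xn G s) :=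
  (G.induce (s : Set V)).colorable_chromaticNumber_of_fintype

private lemma card_coe' (s : Finset V) : Fintype.card ↥(s : Set V) = s.card :=
  (Fintype.card_congr (Equiv.subtypeEquivRight (fun _ => Finset.mem_coe))).trans
    (Fintype.card_coe s)

private lemma Xn_le_card (G : SimpleGraph V) (s : Finset V) : Xn G s ≤ s.card := by
  have h := ((G.induce (s : Set V)).colorable_of_fintype).chromaticNumber_le
  rw [chrom_eq] at h
  have h2 : Xn G s ≤ Fintype.card ↥(s : Set V) := by exact_mod_cast h
  rwa [card_coe'] at h2

private lemma one_le_Xn (G : SimpleGraph V) {s : Finset V} (h : s.Nonempty) : 1 ≤ Xn G s := by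
  have : Nonempty ↥(s : Set V) := ⟨⟨h.choose, h.choose_spec⟩⟩
  have h2 := SimpleGraph.chromaticNumber_pos ((G.induce (s : Set V)).colorable_of_fintype)
  rw [chrom_eq] at h2
  have h3 : 0 < Xn G s := by exact_mod_cast h2
  omega

private lemma Dn_lt_card (G : SimpleGraph V) {s : Finset V} (h : s.Nonempty) :
    Dn G s + 1 ≤ s.card := by
  have : Nonempty ↥(s : Set V) := ⟨⟨h.choose, h.choose_spec⟩⟩
  have h2 := (G.induce (s : Set V)).maxDegree_lt_card_verts
  rw [card_coe'] at h2
  rw [Dn_def]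
  omega

private lemma degree_induce (G : SimpleGraph V) (s : Finset V) (v : ↥(s : Set V)) :
    (G.induce (s : Set V)).degree v = (s.filter (fun u => G.Adj v.1 u)).card := by
  show ((G.induce (s : Set V)).neighborFinset v).card = _
  refine Finset.card_bij (fun a _ => a.1) ?_ ?_ ?_
  · intro a ha
    rw [SimpleGraph.mem_neighborFinset] at ha
    rw [Finset.mem_filter]
    exact ⟨a.2, ha⟩
  · intro a _ b _ h
    exact Subtype.ext h
  · intro u hu
    rw [Finset.mem_filter] at hu
    refine ⟨⟨u, hu.1⟩, ?_, rfl⟩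
    rw [SimpleGraph.mem_neighborFinset]
    exact hu.2

/-! ### Clique number via ambient cliques -/

private lemma le_Wn (G : SimpleGraph V) {c s : Finset V} (hcs : c ⊆ s) (hc : G.IsClique ↑c) :
    c.card ≤ Wn G s := by
  classical
  let emb : {x // x ∈ c} ↪ ↥(s : Set V) :=
    ⟨fun x => ⟨x.1, hcs x.2⟩, fun a b h => Subtype.ext (congrArg (Subtype.val : ↥(s : Set V) → V) h)⟩
  have h1 : (c.attach.map emb).card = c.card := by rw [Finset.card_map, Finset.card_attach]
  have h2 : (G.induce (s : Set V)).IsClique ↑(c.attach.map emb) := by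
    rw [Finset.coe_map]
    rintro x ⟨a, _, rfl⟩ y ⟨b, _, rfl⟩ hxy
    show G.Adj a.1 b.1
    exact hc a.2 b.2 (fun h => hxy (Subtype.ext h))
  calc c.card = (c.attach.map emb).card := h1.symm
    _ ≤ Wn G s := h2.card_le_cliqueNum

private lemma Wn_exists (G : SimpleGraph V) (s : Finset V) :
    ∃ c : Finset V, c ⊆ s ∧ G.IsClique ↑c ∧ c.card = Wn G s := by
  obtain ⟨K, hK⟩ := (G.induce (s : Set V)).exists_isNClique_cliqueNum
  refine ⟨K.map ⟨Subtype.val, Subtype.val_injective⟩, ?_, ?_, by rw [Finset.card_map]; exact hK.2⟩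
  · intro x hx
    rw [Finset.mem_map] at hx
    obtain ⟨a, _, rfl⟩ := hx
    exact a.2
  · rw [Finset.coe_map]
    rintro x ⟨a, ha, rfl⟩ y ⟨b, hb, rfl⟩ hxy
    exact hK.1 ha hb (fun h => hxy (congrArg Subtype.val h))

private lemma Wn_mono (G : SimpleGraph V) {t s : Finset V} (h : t ⊆ s) : Wn G t ≤ Wn G s := by
  obtain ⟨c, hct, hcl, hcc⟩ := Wn_exists G t
  have := le_Wn G (hct.trans h) hcl
  omega

private lemma Wn_le_Xn (G : SimpleGraph V) (s : Finset V) : Wn G s ≤ Xn G s := by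
  obtain ⟨K, hK⟩ := (G.induce (s : Set V)).exists_isNClique_cliqueNum
  have h := hK.1.card_le_chromaticNumber
  rw [chrom_eq] at h
  have h2 : K.card ≤ Xn G s := by exact_mod_cast h
  have h3 : K.card = Wn G s := hK.2
  omega

private lemma Wn_le_Wn_add (G : SimpleGraph V) {t s : Finset V} (h : t ⊆ s) :
    Wn G s ≤ Wn G t + (s \ t).card := by
  obtain ⟨c, hcs, hcl, hcc⟩ := Wn_exists G s
  have h2 := le_Wn G (show c ∩ t ⊆ t from Finset.inter_subset_right)
    (hcl.subset (Finset.coe_subset.2 (show c ∩ t ⊆ c from Finset.inter_subset_left)))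
  have h4 := Finset.card_le_card (Finset.sdiff_subset_sdiff hcs (le_refl t))
  have h5 : (c ∩ t).card + (c \ t).card = c.card := Finset.card_inter_add_card_sdiff c t
  omega

/-! ### Coloring lemmas -/

private lemma Xn_le_Xn_add (G : SimpleGraph V) {t s : Finset V} (h : t ⊆ s) :
    Xn G s ≤ Xn G t + (s \ t).card := by
  obtain ⟨C⟩ := colorable_Xn G t
  let C' : (G.induce (s : Set V)).Coloring (Fin (Xn G t) ⊕ ↥(s \ t)) :=
    SimpleGraph.Coloring.mk
      (fun x => if hx : x.1 ∈ t then Sum.inl (C ⟨x.1, hx⟩)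
        else Sum.inr ⟨x.1, Finset.mem_sdiff.2 ⟨x.2, hx⟩⟩)
      (by
        intro a b hab hEq
        by_cases ha : a.1 ∈ t <;> by_cases hb : b.1 ∈ t
        · rw [dif_pos ha, dif_pos hb] at hEq
          simp only [Sum.inl.injEq] at hEq
          exact C.valid (show (G.induce (t : Set V)).Adj ⟨a.1, ha⟩ ⟨b.1, hb⟩ from hab) hEq
        · rw [dif_pos ha, dif_neg hb] at hEq
          exact absurd hEq (by simp)
        · rw [dif_neg ha, dif_pos hb] at hEq
          exact absurd hEq (by simp)
        · rw [dif_neg ha, dif_neg hb] at hEq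
          simp only [Sum.inr.injEq, Subtype.mk.injEq] at hEq
          exact hab.ne (Subtype.ext hEq))
  have hcol := C'.colorable
  rw [Fintype.card_sum, Fintype.card_fin, Fintype.card_coe] at hcol
  have h3 := hcol.chromaticNumber_le
  rw [chrom_eq] at h3
  exact_mod_cast h3

private lemma Xn_insert (G : SimpleGraph V) {v : V} {nb : Finset V} (hv : v ∉ nb)
    (hdom : ∀ x ∈ nb, G.Adj v x) : Xn G (insert v nb) = Xn G nb + 1 := by
  apply le_antisymm
  · have h1 := Xn_le_Xn_add G (Finset.subset_insert v nb)
    have h2 : (insert v nb \ nb) = {v} := by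
      ext x
      simp only [Finset.mem_sdiff, Finset.mem_insert, Finset.mem_singleton]
      constructor
      · rintro ⟨hx | hx, hnx⟩
        · exact hx
        · exact absurd hx hnx
      · rintro rfl
        exact ⟨Or.inl rfl, hv⟩
    rw [h2, Finset.card_singleton] at h1
    exact h1
  · set n := Xn G (insert v nb) with hn
    obtain ⟨C⟩ := colorable_Xn G (insert v nb)
    have hvmem : v ∈ insert v nb := Finset.mem_insert_self _ _
    set c0 := C ⟨v, hvmem⟩ with hc0
    let D : (G.induce (nb : Set V)).Coloring {a : Fin n // a ≠ c0} :=
      SimpleGraph.Coloring.mk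
        (fun x => ⟨C ⟨x.1, Finset.mem_insert_of_mem x.2⟩,
          C.valid (show (G.induce ((insert v nb : Finset V) : Set V)).Adj
            ⟨x.1, Finset.mem_insert_of_mem x.2⟩ ⟨v, hvmem⟩ from (hdom x.1 x.2).symm)⟩)
        (by
          intro a b hab hEq
          exact C.valid
            (show (G.induce ((insert v nb : Finset V) : Set V)).Adj
              ⟨a.1, Finset.mem_insert_of_mem a.2⟩ ⟨b.1, Finset.mem_insert_of_mem b.2⟩ from hab)
            (congrArg Subtype.val hEq))
    have hcard : Fintype.card {a : Fin n // a ≠ c0} = n - 1 := by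
      have := Fintype.card_subtype_compl (fun a : Fin n => a = c0)
      simp only [Fintype.card_subtype_eq, Fintype.card_fin] at this
      convert this using 2
    have h3 := D.colorable.chromaticNumber_le
    rw [chrom_eq, hcard] at h3
    have h4 : Xn G nb ≤ n - 1 := by exact_mod_cast h3
    have h5 : 1 ≤ n := one_le_Xn G (Finset.insert_nonempty _ _)
    omega

private lemma Wn_insert (G : SimpleGraph V) {v : V} {nb : Finset V} (hv : v ∉ nb)
    (hdom : ∀ x ∈ nb, G.Adj v x) : Wn G (insert v nb) = Wn G nb + 1 := by
  apply le_antisymm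
  · obtain ⟨c, hcs, hcl, hcc⟩ := Wn_exists G (insert v nb)
    by_cases hvc : v ∈ c
    · have h1 : c.erase v ⊆ nb := by
        intro x hx
        rcases Finset.mem_insert.1 (hcs (Finset.mem_of_mem_erase hx)) with h | h
        · exact absurd h (Finset.ne_of_mem_erase hx)
        · exact h
      have h2 : G.IsClique ↑(c.erase v) :=
        hcl.subset (Finset.coe_subset.2 (Finset.erase_subset _ _))
      have h3 := le_Wn G h1 h2
      have h4 : (c.erase v).card = c.card - 1 := Finset.card_erase_of_mem hvc
      have h5 : 1 ≤ c.card := Finset.card_pos.2 ⟨v, hvc⟩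
      omega
    · have h1 : c ⊆ nb := fun x hx =>
        (Finset.mem_insert.1 (hcs hx)).resolve_left (fun h => hvc (h ▸ hx))
      have h3 := le_Wn G h1 hcl
      omega
  · obtain ⟨c, hcs, hcl, hcc⟩ := Wn_exists G nb
    have h1 : insert v c ⊆ insert v nb := Finset.insert_subset_insert _ hcs
    have h2 : G.IsClique ↑(insert v c) := by
      rw [Finset.coe_insert]
      exact hcl.insert (fun b hb _ => hdom b (hcs hb))
    have h3 := le_Wn G h1 h2
    have h4 : (insert v c).card = c.card + 1 :=
      Finset.card_insert_of_notMem (fun h => hv (hcs h))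
    omega

/-! ### Transfer lemmas between nested induced subgraphs -/

private lemma Wn_double (G : SimpleGraph V) (s : Set V) (t : Finset ↥s) :
    ((G.induce s).induce (t : Set ↥s)).cliqueNum = Wn G (t.image Subtype.val) := by
  rw [Wn_def]
  have h : ((t.image Subtype.val : Finset V) : Set V) = Subtype.val '' (t : Set ↥s) :=
    Finset.coe_image
  rw [h]
  exact cliqueNum_eq_of_iso (induceInduceIso G s ↑t)

private lemma chrom_double (G : SimpleGraph V) (s : Set V) (t : Finset ↥s) :
    ((G.induce s).induce (t : Set ↥s)).chromaticNumber = (Xn G (t.image Subtype.val) : ℕ∞) := by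
  rw [← chrom_eq]
  have h : ((t.image Subtype.val : Finset V) : Set V) = Subtype.val '' (t : Set ↥s) :=
    Finset.coe_image
  rw [h]
  exact chromaticNumber_eq_of_iso (induceInduceIso G s ↑t)

private lemma maxDegree_set_congr (G : SimpleGraph V) {A B : Set V}
    [Fintype ↥A] [Fintype ↥B]
    [DecidableRel (G.induce A).Adj] [DecidableRel (G.induce B).Adj] (h : A = B) :
    (G.induce A).maxDegree = (G.induce B).maxDegree := by
  subst h
  congr! <;> exact Subsingleton.elim _ _

private lemma Dn_double (G : SimpleGraph V) (s : Set V) (t : Finset ↥s)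
    {_ : Fintype ↥(t : Set ↥s)} {_ : DecidableRel ((G.induce s).induce (t : Set ↥s)).Adj} :
    ((G.induce s).induce (t : Set ↥s)).maxDegree = Dn G (t.image Subtype.val) := by
  rw [Dn_def]
  refine (maxDegree_eq_of_iso (induceInduceIso G s ↑t)).trans (maxDegree_set_congr G ?_)
  exact (Finset.coe_image (f := Subtype.val) (s := t)).symm

private lemma image_subtype_of_subset (s : Set V) [DecidablePred (· ∈ s)] (t : Finset V)
    (h : ∀ x ∈ t, x ∈ s) :
    ((t.subtype (· ∈ s)).image Subtype.val) = t := by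
  ext x
  simp only [Finset.mem_image, Finset.mem_subtype]
  constructor
  · rintro ⟨a, ha, rfl⟩
    exact ha
  · intro hx
    exact ⟨⟨x, h x hx⟩, hx, rfl⟩

private lemma omega_iff (G : SimpleGraph V) (k : ℕ) (s : Finset V) :
    OmegaMem k (G.induce (s : Set V)) ↔
      ∀ t ⊆ s, t.Nonempty → Dn G t + 1 ≤ Wn G t + k := by
  constructor
  · intro h t hts htne
    have himg : (t.subtype (· ∈ (s : Set V))).image Subtype.val = t :=
      image_subtype_of_subset (s : Set V) t (fun x hx => hts hx)
    have hne : (t.subtype (· ∈ (s : Set V))).Nonempty := by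
      obtain ⟨x, hx⟩ := htne
      exact ⟨⟨x, hts hx⟩, by rw [Finset.mem_subtype]; exact hx⟩
    have h2 := h (t.subtype (· ∈ (s : Set V))) hne
    rwa [Dn_double, Wn_double, himg] at h2
  · intro h t' hne
    have hsub : t'.image Subtype.val ⊆ s := by
      intro x hx
      rw [Finset.mem_image] at hx
      obtain ⟨a, _, rfl⟩ := hx
      exact a.2
    have h2 := h _ hsub (hne.image _)
    rw [Dn_double G (s : Set V) t', Wn_double G (s : Set V) t']
    exact h2

private lemma upsilon_iff (G : SimpleGraph V) (k : ℕ) (s : Finset V) :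
    UpsilonMem k (G.induce (s : Set V)) ↔
      ∀ t ⊆ s, t.Nonempty → Dn G t + 1 ≤ Xn G t + k := by
  constructor
  · intro h t hts htne
    have himg : (t.subtype (· ∈ (s : Set V))).image Subtype.val = t :=
      image_subtype_of_subset (s : Set V) t (fun x hx => hts hx)
    have hne : (t.subtype (· ∈ (s : Set V))).Nonempty := by
      obtain ⟨x, hx⟩ := htne
      exact ⟨⟨x, hts hx⟩, by rw [Finset.mem_subtype]; exact hx⟩
    have h2 := h (t.subtype (· ∈ (s : Set V))) hne
    rw [Dn_double, chrom_double, himg] at h2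
    exact_mod_cast h2
  · intro h t' hne
    have hsub : t'.image Subtype.val ⊆ s := by
      intro x hx
      rw [Finset.mem_image] at hx
      obtain ⟨a, _, rfl⟩ := hx
      exact a.2
    have h2 := h _ hsub (hne.image _)
    rw [Dn_double G (s : Set V) t', chrom_double G (s : Set V) t']
    exact_mod_cast h2

private lemma nbhd_iff (G : SimpleGraph V) :
    NbhdPerfect G ↔ ∀ (v : V) (t : Finset V), (∀ x ∈ t, G.Adj v x) → Wn G t = Xn G t := by
  constructor
  · intro h v t hadj
    have hsub : ∀ x ∈ t, x ∈ G.neighborSet v := fun x hx => hadj x hx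
    have himg : (t.subtype (· ∈ G.neighborSet v)).image Subtype.val = t :=
      image_subtype_of_subset _ t hsub
    have h2 := h v (t.subtype (· ∈ G.neighborSet v))
    rw [Wn_double, chrom_double, himg] at h2
    exact_mod_cast h2
  · intro h v t'
    rw [Wn_double G (G.neighborSet v) t', chrom_double G (G.neighborSet v) t']
    have hadj : ∀ x ∈ t'.image Subtype.val, G.Adj v x := by
      intro x hx
      rw [Finset.mem_image] at hx
      obtain ⟨a, _, rfl⟩ := hx
      exact a.2
    exact_mod_cast h v (t'.image Subtype.val) hadj

/-! ### The two main directions (finset level) -/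

private lemma main_forward (G : SimpleGraph V)
    (hLP : ∀ (v : V) (t : Finset V), (∀ x ∈ t, G.Adj v x) → Wn G t = Xn G t)
    (k : ℕ) (s : Finset V)
    (hup : ∀ t ⊆ s, t.Nonempty → Dn G t + 1 ≤ Xn G t + k) :
    ∀ t ⊆ s, t.Nonempty → Dn G t + 1 ≤ Wn G t + k := by
  intro t hts htne
  have hne : Nonempty ↥(t : Set V) := ⟨⟨htne.choose, htne.choose_spec⟩⟩
  obtain ⟨v, hv⟩ := (G.induce (t : Set V)).exists_maximal_degree_vertex
  have hv0t : v.1 ∈ t := v.2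
  set nb := t.filter (fun u => G.Adj v.1 u) with hnb
  have hnbt : nb ⊆ t := Finset.filter_subset _ _
  have hvnb : v.1 ∉ nb := by
    rw [hnb, Finset.mem_filter]
    rintro ⟨-, h⟩
    exact G.loopless.irrefl _ h
  have hdom : ∀ x ∈ nb, G.Adj v.1 x := fun x hx => (Finset.mem_filter.1 hx).2
  have hct : insert v.1 nb ⊆ t := Finset.insert_subset hv0t hnbt
  have hDt : Dn G t = nb.card := by
    rw [Dn_def, hv, degree_induce]
  have hDc : nb.card ≤ Dn G (insert v.1 nb) := by
    have h1 : (insert v.1 nb).filter (fun u => G.Adj v.1 u) = nb := by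
      ext x
      simp only [Finset.mem_filter, Finset.mem_insert]
      constructor
      · rintro ⟨hx | hx, hadj⟩
        · exact absurd (hx ▸ hadj) (G.loopless.irrefl _)
        · exact hx
      · intro hx
        exact ⟨Or.inr hx, hdom x hx⟩
    have h2 := degree_induce G (insert v.1 nb) ⟨v.1, by
      rw [Finset.mem_coe]; exact Finset.mem_insert_self _ _⟩
    rw [h1] at h2
    rw [Dn_def]
    calc nb.card = _ := h2.symm
      _ ≤ _ := SimpleGraph.degree_le_maxDegree _ _
  have h3 := hup _ (hct.trans hts) (Finset.insert_nonempty _ _)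
  have h4 : Xn G (insert v.1 nb) = Xn G nb + 1 := Xn_insert G hvnb hdom
  have h5 : Wn G nb = Xn G nb := hLP v.1 nb hdom
  have h6 : Wn G (insert v.1 nb) = Wn G nb + 1 := Wn_insert G hvnb hdom
  have h7 : Wn G (insert v.1 nb) ≤ Wn G t := Wn_mono G hct
  omega

private lemma main_converse (G : SimpleGraph V)
    (H : ∀ (k : ℕ) (c : Finset V),
      (∀ t ⊆ c, t.Nonempty → Dn G t + 1 ≤ Xn G t + k) →
      (∀ t ⊆ c, t.Nonempty → Dn G t + 1 ≤ Wn G t + k)) :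
    ∀ (v : V) (a : Finset V), (∀ x ∈ a, G.Adj v x) → Wn G a = Xn G a := by
  intro v a hadj
  by_contra hne0
  have hlt : Wn G a < Xn G a := lt_of_le_of_ne (Wn_le_Xn G a) hne0
  obtain ⟨t, ht, hmin⟩ := Finset.exists_min_image
    (a.powerset.filter (fun u => Wn G u < Xn G u)) Finset.card
    ⟨a, by rw [Finset.mem_filter, Finset.mem_powerset]; exact ⟨le_refl a, hlt⟩⟩
  rw [Finset.mem_filter, Finset.mem_powerset] at ht
  obtain ⟨hta, htlt⟩ := ht
  have hminimal : ∀ u ⊆ a, u.card < t.card → Wn G u = Xn G u := by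
    intro u hua hcard
    by_contra hune
    have h := hmin u (by
      rw [Finset.mem_filter, Finset.mem_powerset]
      exact ⟨hua, lt_of_le_of_ne (Wn_le_Xn G u) hune⟩)
    omega
  have htdom : ∀ x ∈ t, G.Adj v x := fun x hx => hadj x (hta hx)
  have hvt : v ∉ t := fun hv => G.loopless.irrefl v (htdom v hv)
  have htne : t.Nonempty := by
    rcases Finset.eq_empty_or_nonempty t with rfl | h
    · have h := Xn_le_card G (∅ : Finset V)
      rw [Finset.card_empty] at h
      omega
    · exact h
  have herase : ∀ u ∈ t, Wn G (t.erase u) = Wn G t ∧ Xn G t = Wn G t + 1 := by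
    intro u hu
    have h1 : t.erase u ⊆ a := (Finset.erase_subset _ _).trans hta
    have h2 : (t.erase u).card < t.card := Finset.card_erase_lt_of_mem hu
    have h3 : Wn G (t.erase u) = Xn G (t.erase u) := hminimal _ h1 h2
    have h4 : Xn G t ≤ Xn G (t.erase u) + (t \ t.erase u).card :=
      Xn_le_Xn_add G (Finset.erase_subset _ _)
    have h5 : (t \ t.erase u).card = 1 := by
      rw [Finset.sdiff_erase_self hu, Finset.card_singleton]
    have h6 : Wn G (t.erase u) ≤ Wn G t := Wn_mono G (Finset.erase_subset _ _)
    omega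
  obtain ⟨u0, hu0⟩ := htne
  have hXt : Xn G t = Wn G t + 1 := (herase u0 hu0).2
  have hXtcard : Xn G t ≤ t.card := Xn_le_card G t
  set k := t.card - Xn G t with hk
  set c := insert v t with hc
  have htc1 : 1 ≤ t.card := Finset.card_pos.2 ⟨u0, hu0⟩
  have hup : ∀ e ⊆ c, e.Nonempty → Dn G e + 1 ≤ Xn G e + k := by
    intro e hec hene
    have hDe := Dn_lt_card G hene
    by_cases hve : v ∈ e
    · set e' := e.erase v with he'
      have hee : e = insert v e' := (Finset.insert_erase hve).symm
      have hve' : v ∉ e' := Finset.notMem_erase _ _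
      have he't : e' ⊆ t := by
        intro x hx
        have hxe := Finset.mem_of_mem_erase hx
        have hxv : x ≠ v := Finset.ne_of_mem_erase hx
        rcases Finset.mem_insert.1 (hec hxe) with h | h
        · exact absurd h hxv
        · exact h
      have hdome' : ∀ x ∈ e', G.Adj v x := fun x hx => htdom x (he't hx)
      have hXe : Xn G e = Xn G e' + 1 := by
        rw [hee]
        exact Xn_insert G hve' hdome'
      have hecard : e.card = e'.card + 1 := by
        rw [hee, Finset.card_insert_of_notMem hve']
      by_cases hfull : e' = t
      · rw [hfull] at hXe hecard
        omega
      · obtain ⟨u, hut, hue⟩ : ∃ u ∈ t, u ∉ e' := by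
          by_contra hno
          push_neg at hno
          exact hfull (Finset.Subset.antisymm he't hno)
        have hsub : e' ⊆ t.erase u := Finset.subset_erase.2 ⟨he't, hue⟩
        have hW1 : Wn G (t.erase u) ≤ Wn G e' + ((t.erase u) \ e').card := Wn_le_Wn_add G hsub
        have hW2 : ((t.erase u) \ e').card = (t.erase u).card - e'.card := Finset.card_sdiff_of_subset hsub
        have hW3 : (t.erase u).card = t.card - 1 := Finset.card_erase_of_mem hut
        have hW4 : Wn G (t.erase u) = Wn G t := (herase u hut).1
        have he'c := Finset.card_le_card hsub
        have hWXe' : Wn G e' = Xn G e' := hminimal e' (he't.trans hta) (by omega)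
        omega
    · have het : e ⊆ t := by
        intro x hx
        rcases Finset.mem_insert.1 (hec hx) with h | h
        · exact absurd (h ▸ hx) hve
        · exact h
      have h1 : Xn G t ≤ Xn G e + (t \ e).card := Xn_le_Xn_add G het
      have h2 : (t \ e).card = t.card - e.card := Finset.card_sdiff_of_subset het
      have h3 : e.card ≤ t.card := Finset.card_le_card het
      omega
  have hom := H k c hup c (le_refl _) (Finset.insert_nonempty _ _)
  have hWc : Wn G c = Wn G t + 1 := Wn_insert G hvt htdom
  have hDc : t.card ≤ Dn G c := by
    have h1 : c.filter (fun u => G.Adj v u) = t := by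
      ext x
      rw [hc]
      simp only [Finset.mem_filter, Finset.mem_insert]
      constructor
      · rintro ⟨hx | hx, hadjx⟩
        · exact absurd (hx ▸ hadjx) (G.loopless.irrefl v)
        · exact hx
      · intro hx
        exact ⟨Or.inr hx, htdom x hx⟩
    have h2 := degree_induce G c ⟨v, by
      rw [Finset.mem_coe, hc]; exact Finset.mem_insert_self _ _⟩
    rw [h1] at h2
    rw [Dn_def]
    calc t.card = _ := h2.symm
      _ ≤ _ := SimpleGraph.degree_le_maxDegree _ _
  omega

end NPaux

theorem nbhdPerfect_iff_omega_eq_upsilon {V : Type*} [Fintype V]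
    (G : SimpleGraph V) :
    NbhdPerfect G ↔
      ∀ (k : ℕ) (s : Finset V),
        (OmegaMem k (G.induce (s : Set V)) ↔ UpsilonMem k (G.induce (s : Set V))) := by
  rw [nbhd_iff]
  constructor
  · intro hLP k s
    rw [omega_iff G k s, upsilon_iff G k s]
    constructor
    · intro h t hts hne
      have h1 := h t hts hne
      have h2 := Wn_le_Xn G t
      omega
    · exact main_forward G hLP k s
  · intro H
    exact main_converse G
      (fun k c hup => (omega_iff G k c).1 ((H k c).2 ((upsilon_iff G k c).2 hup)))
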